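/- Let λ ≠ 0 be real, p ≠ 0 real, n ≥ 1, h > 0 with |ph| < π. Define ω̄ = -iλp and ω_m = -i ∑_{j=0}^{m} (2^j λ/(3^j h)) sin(ph) sin^{2j}(ph/2). Then |ω_{n+1} - ω̄| < |ω_n - ω̄|; that is, for the pure transport equation, increasing the number of mass-lumping corrections strictly decreases the distance between the numerical Fourier symbol and the exact symbol. -/

import Mathlib

open Finset in
/-- Fourier symbol of the `m`-th corrected mass-lumped scheme for pure transport. -/
noncomputable def omegaTransport (lam p h : ℝ) (m : ℕ) : ℂ :=
  -Complex.I * ((∑ j ∈ range (m+1),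
      (2:ℝ)^j * lam / (3^j * h) * Real.sin (p*h) * Real.sin (p*h/2) ^ (2*j) : ℝ) : ℂ)

open Real in
/-- Cusa–Huygens inequality. -/
lemma cusa_aux (x : ℝ) (hx : 0 ≤ x) (hπ : x ≤ π) : 3 * Real.sin x ≤ x * (2 + Real.cos x) := by
  set f : ℝ → ℝ := fun y => y * (2 + Real.cos y) - 3 * Real.sin y with hf
  have hderiv : ∀ y : ℝ, HasDerivAt f (2 - 2 * Real.cos y - y * Real.sin y) y := by
    intro y
    have h1 := (hasDerivAt_id y).mul ((hasDerivAt_const y (2:ℝ)).add (Real.hasDerivAt_cos y))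
    have h2 : HasDerivAt (fun y : ℝ => 3 * Real.sin y) (3 * Real.cos y) y :=
      (Real.hasDerivAt_sin y).const_mul 3
    have := h1.sub h2
    simp only [id_eq] at this
    exact this.congr_deriv (by simp only [Pi.add_apply]; ring)
  have hmono : MonotoneOn f (Set.Icc 0 π) := by
    apply monotoneOn_of_deriv_nonneg (convex_Icc 0 π)
    · exact Continuous.continuousOn (by continuity)
    · intro y hy
      exact (hderiv y).differentiableAt.differentiableWithinAt
    · intro y hy
      rw [interior_Icc] at hy
      rw [(hderiv y).deriv]
      have hy1 : 0 < y / 2 := by linarith [hy.1]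
      have hy2 : y / 2 < π / 2 := by linarith [hy.2]
      have htan : y / 2 < Real.tan (y / 2) := Real.lt_tan hy1 hy2
      have hcos : 0 < Real.cos (y / 2) := Real.cos_pos_of_mem_Ioo ⟨by linarith, hy2⟩
      have hsin : 0 < Real.sin (y / 2) := Real.sin_pos_of_pos_of_lt_pi hy1 (by linarith [Real.pi_pos])
      have hkey : y / 2 * Real.cos (y / 2) < Real.sin (y / 2) := by
        rw [Real.tan_eq_sin_div_cos] at htan
        calc y / 2 * Real.cos (y / 2) < Real.sin (y / 2) / Real.cos (y / 2) * Real.cos (y / 2) := by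
              exact mul_lt_mul_of_pos_right htan hcos
          _ = Real.sin (y / 2) := by field_simp
      have hcosy : Real.cos y = 1 - 2 * Real.sin (y / 2) ^ 2 := by
        have := Real.sin_sq_eq_half_sub (y / 2)
        rw [show 2 * (y / 2) = y by ring] at this
        linarith
      have hsiny : Real.sin y = 2 * Real.sin (y / 2) * Real.cos (y / 2) := by
        have := Real.sin_two_mul (y / 2)
        rw [show 2 * (y / 2) = y by ring] at this
        exact this
      rw [hcosy, hsiny]
      nlinarith [hsin.le, hkey, mul_pos hsin hsin]
  have h0 : f 0 = 0 := by simp [hf]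
  have := hmono (Set.mem_Icc.2 ⟨le_refl 0, Real.pi_pos.le⟩) (Set.mem_Icc.2 ⟨hx, hπ⟩) hx
  rw [h0] at this
  simp only [hf] at this
  linarith

open Finset in
/-- Key real inequality for positive `x`. -/
lemma key_pos (x : ℝ) (hx : 0 < x) (hπ : x < Real.pi) (n : ℕ) :
    |Real.sin x * (∑ j ∈ range (n+1+1), ((2:ℝ)/3 * Real.sin (x/2) ^ 2) ^ j) - x|
      < |Real.sin x * (∑ j ∈ range (n+1), ((2:ℝ)/3 * Real.sin (x/2) ^ 2) ^ j) - x| := by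
  set t : ℝ := (2:ℝ)/3 * Real.sin (x/2) ^ 2 with ht
  have hsinh : 0 < Real.sin (x/2) :=
    Real.sin_pos_of_pos_of_lt_pi (by linarith) (by linarith [Real.pi_pos])
  have hsin : 0 < Real.sin x := Real.sin_pos_of_pos_of_lt_pi hx hπ
  have htpos : 0 < t := by positivity
  have ht1 : t < 1 := by
    have := Real.sin_sq_le_one (x/2)
    rw [ht]; nlinarith
  have hcosx : Real.cos x = 1 - 2 * Real.sin (x / 2) ^ 2 := by
    have := Real.sin_sq_eq_half_sub (x / 2)
    rw [show 2 * (x / 2) = x by ring] at this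
    linarith
  have hcusa : Real.sin x ≤ x * (1 - t) := by
    have h1t : 1 - t = (2 + Real.cos x) / 3 := by rw [ht, hcosx]; ring
    have := cusa_aux x hx.le hπ.le
    rw [h1t]
    linarith
  have hgeom : ∀ m : ℕ, (1 - t) * ∑ j ∈ range m, t ^ j = 1 - t ^ m := by
    intro m
    have h := geom_sum_eq (by linarith : t ≠ 1) m
    rw [h]
    have ht1' : t - 1 ≠ 0 := by intro hc; rw [sub_eq_zero] at hc; linarith
    field_simp
    ring
  -- error is positive
  have herr : ∀ m : ℕ, Real.sin x * t ^ (m+1) ≤ (1 - t) * (x - Real.sin x * ∑ j ∈ range (m+1), t ^ j) := by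
    intro m
    have h1 : (1 - t) * (Real.sin x * ∑ j ∈ range (m+1), t ^ j)
        = Real.sin x * (1 - t ^ (m+1)) := by
      rw [show (1 - t) * (Real.sin x * ∑ j ∈ range (m+1), t ^ j)
          = Real.sin x * ((1 - t) * ∑ j ∈ range (m+1), t ^ j) by ring, hgeom (m+1)]
    have h2 : (1 - t) * x ≥ Real.sin x := by nlinarith
    nlinarith
  have hpos : ∀ m : ℕ, 0 < x - Real.sin x * ∑ j ∈ range (m+1), t ^ j := by
    intro m
    have := herr m
    have h1 : 0 < Real.sin x * t ^ (m+1) := by positivity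
    nlinarith
  have hdiff : Real.sin x * (∑ j ∈ range (n+1+1), t ^ j)
      = Real.sin x * (∑ j ∈ range (n+1), t ^ j) + Real.sin x * t ^ (n+1) := by
    rw [Finset.sum_range_succ]; ring
  have h1 := hpos n
  have h2 := hpos (n+1)
  have h3 : 0 < Real.sin x * t ^ (n+1) := by positivity
  rw [abs_of_neg (by nlinarith), abs_of_neg (by nlinarith)]
  nlinarith

open Finset in
/-- Key real inequality for all nonzero `x` with `|x| < π`. -/
lemma key_all (x : ℝ) (hx : x ≠ 0) (hπ : |x| < Real.pi) (n : ℕ) :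
    |Real.sin x * (∑ j ∈ range (n+1+1), ((2:ℝ)/3 * Real.sin (x/2) ^ 2) ^ j) - x|
      < |Real.sin x * (∑ j ∈ range (n+1), ((2:ℝ)/3 * Real.sin (x/2) ^ 2) ^ j) - x| := by
  rcases lt_or_gt_of_ne hx with hneg | hposx
  · have h1 : 0 < -x := by linarith
    have h2 : -x < Real.pi := by rwa [abs_of_neg hneg] at hπ
    have this := key_pos (-x) h1 h2 n
    have hs : Real.sin (-x) = -Real.sin x := Real.sin_neg x
    have hs2 : Real.sin (-x/2) ^ 2 = Real.sin (x/2) ^ 2 := by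
      rw [neg_div, Real.sin_neg, neg_sq]
    rw [hs, hs2] at this
    have heq : ∀ m : ℕ, |(-Real.sin x) * (∑ j ∈ range m, ((2:ℝ)/3 * Real.sin (x/2) ^ 2) ^ j) - -x|
        = |Real.sin x * (∑ j ∈ range m, ((2:ℝ)/3 * Real.sin (x/2) ^ 2) ^ j) - x| := by
      intro m
      rw [show (-Real.sin x) * (∑ j ∈ range m, ((2:ℝ)/3 * Real.sin (x/2) ^ 2) ^ j) - -x
          = -(Real.sin x * (∑ j ∈ range m, ((2:ℝ)/3 * Real.sin (x/2) ^ 2) ^ j) - x) by ring,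
        abs_neg]
    rw [heq (n+1+1), heq (n+1)] at this
    exact this
  · exact key_pos x hposx (by rwa [abs_of_pos hposx] at hπ) n

open Finset in
theorem stmt_8 (lam p h : ℝ) (n : ℕ) (hlam : lam ≠ 0) (hp : p ≠ 0) (hn : 1 ≤ n)
    (hh : 0 < h) (hz : |p*h| < Real.pi) :
    ‖omegaTransport lam p h (n+1) - (-Complex.I * ((lam * p : ℝ) : ℂ))‖
      < ‖omegaTransport lam p h n - (-Complex.I * ((lam * p : ℝ) : ℂ))‖ := by
  have habs : ∀ m : ℕ,
      ‖omegaTransport lam p h m - (-Complex.I * ((lam * p : ℝ) : ℂ))‖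
      = |(∑ j ∈ range (m+1),
          (2:ℝ)^j * lam / (3^j * h) * Real.sin (p*h) * Real.sin (p*h/2) ^ (2*j)) - lam * p| := by
    intro m
    rw [omegaTransport, show
      -Complex.I * ((∑ j ∈ range (m+1),
        (2:ℝ)^j * lam / (3^j * h) * Real.sin (p*h) * Real.sin (p*h/2) ^ (2*j) : ℝ) : ℂ)
        - (-Complex.I * ((lam * p : ℝ) : ℂ))
      = -Complex.I * (((∑ j ∈ range (m+1),
        (2:ℝ)^j * lam / (3^j * h) * Real.sin (p*h) * Real.sin (p*h/2) ^ (2*j) : ℝ) : ℂ)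
        - ((lam * p : ℝ) : ℂ)) by ring]
    rw [norm_mul]
    simp only [norm_neg, Complex.norm_I, one_mul]
    rw [← Complex.ofReal_sub, Complex.norm_real, Real.norm_eq_abs]
  rw [habs, habs]
  -- rewrite the sum
  have hsum : ∀ m : ℕ,
      (∑ j ∈ range (m+1), (2:ℝ)^j * lam / (3^j * h) * Real.sin (p*h) * Real.sin (p*h/2) ^ (2*j))
      = (lam / h) * (Real.sin (p*h) * ∑ j ∈ range (m+1), ((2:ℝ)/3 * Real.sin (p*h/2) ^ 2) ^ j) := by
    intro m
    rw [Finset.mul_sum, Finset.mul_sum]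
    apply Finset.sum_congr rfl
    intro j _
    rw [pow_mul, mul_pow, div_pow]
    have h3 : ((3:ℝ)^j) ≠ 0 := by positivity
    field_simp
  rw [hsum, hsum]
  have hfac : ∀ m : ℕ,
      |(lam / h) * (Real.sin (p*h) * ∑ j ∈ range (m+1), ((2:ℝ)/3 * Real.sin (p*h/2) ^ 2) ^ j) - lam * p|
      = |lam / h| * |Real.sin (p*h) * (∑ j ∈ range (m+1), ((2:ℝ)/3 * Real.sin ((p*h)/2) ^ 2) ^ j) - p * h| := by
    intro m
    rw [← abs_mul]
    congr 1
    field_simp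
  rw [hfac, hfac]
  have hlamh : 0 < |lam / h| := by
    rw [abs_pos]
    exact div_ne_zero hlam hh.ne'
  exact mul_lt_mul_of_pos_left (key_all (p*h) (mul_ne_zero hp hh.ne') hz n) hlamh
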